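/- arXiv:2007.14717 — 2 statements merged into one kernel-verified Lean document; each statement's English description precedes it below -/
import Mathlib

section
/- Let n be a positive integer, let 0 < p_out < p_in < 1, and let 0 < θ < η with θ + η ≤ 1. Under the SSBM-with-oracle joint distribution, for every symmetric 0-1 adjacency matrix a (with zero diagonal) and every vector s ∈ {−1,0,1}ⁿ such that Pr(A = a, S = s) > 0, the set of maximizers over σ ∈ {−1,1}ⁿ of the posterior probability Pr(σ⁰ = σ | A = a, S = s) is equal to the set of minimizers over σ ∈ {−1,1}ⁿ of cut(C₁^σ, a) − τ·|C₁^σ|·(n − |C₁^σ|) + λ·#{i : s_i ≠ 0 and σ_i ≠ s_i}, where τ := log((1−p_out)/(1−p_in)) / log((p_in(1−p_out))/(p_out(1−p_in))) and λ := log(η/θ) / log((p_in(1−p_out))/(p_out(1−p_in))). -/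
open Finset

noncomputable section

/-- Sign value of a Boolean cluster label: `true ↦ 1`, `false ↦ -1`. -/
def sgnB (b : Bool) : ℤ := if b then 1 else -1

/-- Joint probability mass of the SSBM-with-oracle distribution at the point
`(σ, a, s)`: the ground truth `σ⁰ = σ` (uniform on `{−1,1}ⁿ`, encoded by `Bool`),
the adjacency matrix `A = a` and the oracle vector `S = s`. -/
def jointMass (n : ℕ) (pin pout η θ : ℝ) (σ : Fin n → Bool)
    (a : Fin n → Fin n → ℕ) (s : Fin n → ℤ) : ℝ :=
  (1 / 2) ^ n *
    (∏ p ∈ Finset.univ.filter (fun p : Fin n × Fin n => p.1 < p.2),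
      (if a p.1 p.2 = 1 then (if σ p.1 = σ p.2 then pin else pout)
        else (if σ p.1 = σ p.2 then 1 - pin else 1 - pout))) *
    ∏ j, (if s j = sgnB (σ j) then η else if s j = - sgnB (σ j) then θ else 1 - η - θ)

/-- Posterior probability `Pr(σ⁰ = σ | A = a, S = s)`, as a ratio of probabilities. -/
def posterior (n : ℕ) (pin pout η θ : ℝ) (σ : Fin n → Bool)
    (a : Fin n → Fin n → ℕ) (s : Fin n → ℤ) : ℝ :=
  jointMass n pin pout η θ σ a s / ∑ σ' : Fin n → Bool, jointMass n pin pout η θ σ' a s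

/-- `cut(C₁^σ, a) = Σ_{i ∈ C₁^σ, j ∉ C₁^σ} a_{ij}`. -/
def cutVal (n : ℕ) (σ : Fin n → Bool) (a : Fin n → Fin n → ℕ) : ℝ :=
  ∑ i, ∑ j, (if σ i = true ∧ σ j = false then (a i j : ℝ) else 0)

/-- The MAP objective `cut(C₁^σ, a) − τ|C₁^σ|(n − |C₁^σ|) + λ #{i : s_i ≠ 0, σ_i ≠ s_i}`. -/
def mapObjective (n : ℕ) (τ lam : ℝ) (σ : Fin n → Bool)
    (a : Fin n → Fin n → ℕ) (s : Fin n → ℤ) : ℝ :=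
  cutVal n σ a
    - τ * ((Finset.univ.filter (fun i => σ i = true)).card : ℝ)
        * ((n : ℝ) - ((Finset.univ.filter (fun i => σ i = true)).card : ℝ))
    + lam * ((Finset.univ.filter (fun i => s i ≠ 0 ∧ sgnB (σ i) ≠ s i)).card : ℝ)

/-- Rewriting a double sum with vanishing diagonal as a sum over ordered pairs `p.1 < p.2`. -/
lemma pair_sum_eq {n : ℕ} (F : Fin n → Fin n → ℝ) (hdiag : ∀ i, F i i = 0) :
    ∑ i, ∑ j, F i j
      = ∑ p ∈ Finset.univ.filter (fun p : Fin n × Fin n => p.1 < p.2),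
          (F p.1 p.2 + F p.2 p.1) := by
  rw [← Fintype.sum_prod_type']
  rw [← Finset.sum_filter_add_sum_filter_not Finset.univ
    (fun p : Fin n × Fin n => p.1 < p.2) (fun p => F p.1 p.2)]
  rw [Finset.sum_add_distrib]
  congr 1
  rw [← Finset.sum_filter_add_sum_filter_not
    (Finset.univ.filter (fun p : Fin n × Fin n => ¬ p.1 < p.2))
    (fun p : Fin n × Fin n => p.2 < p.1) (fun p => F p.1 p.2)]
  have h0 : ∑ p ∈ (Finset.univ.filter (fun p : Fin n × Fin n => ¬ p.1 < p.2)).filter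
      (fun p : Fin n × Fin n => ¬ p.2 < p.1), F p.1 p.2 = 0 := by
    apply Finset.sum_eq_zero
    intro p hp
    simp only [Finset.mem_filter] at hp
    have : p.1 = p.2 := le_antisymm (not_lt.mp hp.2) (not_lt.mp hp.1.2)
    rw [this]; exact hdiag p.2
  rw [h0, add_zero]
  apply Finset.sum_nbij' (fun p => Prod.swap p) (fun p => Prod.swap p)
  · intro p hp; simp only [Finset.mem_filter] at hp ⊢
    exact ⟨Finset.mem_univ _, hp.2⟩
  · intro p hp; simp only [Finset.mem_filter] at hp ⊢
    exact ⟨⟨Finset.mem_univ _, not_lt.mpr hp.2.le⟩, hp.2⟩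
  · intro p _; simp
  · intro p _; simp
  · intro p hp; simp

/-- The cut value as a sum over ordered pairs. -/
lemma cutVal_pairs {n : ℕ} (σ : Fin n → Bool) (a : Fin n → Fin n → ℕ)
    (hasym : ∀ i j, a i j = a j i) :
    cutVal n σ a
      = ∑ p ∈ Finset.univ.filter (fun p : Fin n × Fin n => p.1 < p.2),
          (if σ p.1 = σ p.2 then 0 else (a p.1 p.2 : ℝ)) := by
  rw [cutVal, pair_sum_eq (fun i j => if σ i = true ∧ σ j = false then (a i j : ℝ) else 0)
    (by intro i; simp)]
  apply Finset.sum_congr rfl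
  intro p _
  rcases hb1 : σ p.1 <;> rcases hb2 : σ p.2 <;>
    simp [hb1, hb2, hasym p.1 p.2]

/-- `|C₁|(n−|C₁|)` as a sum over ordered pairs. -/
lemma count_pairs {n : ℕ} (σ : Fin n → Bool) :
    ((Finset.univ.filter (fun i => σ i = true)).card : ℝ)
        * ((n : ℝ) - ((Finset.univ.filter (fun i => σ i = true)).card : ℝ))
      = ∑ p ∈ Finset.univ.filter (fun p : Fin n × Fin n => p.1 < p.2),
          (if σ p.1 = σ p.2 then 0 else (1 : ℝ)) := by
  have hcard : ((Finset.univ.filter (fun i => σ i = true)).card : ℝ)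
      + ((Finset.univ.filter (fun i => σ i = false)).card : ℝ) = (n : ℝ) := by
    have := Finset.card_filter_add_card_filter_not
      (s := (Finset.univ : Finset (Fin n))) (p := fun i => σ i = true)
    have h2 : (Finset.univ.filter (fun a => ¬ σ a = true))
        = (Finset.univ.filter (fun i => σ i = false)) := by
      apply Finset.filter_congr
      intro i _
      simp
    rw [h2, Finset.card_univ, Fintype.card_fin] at this
    exact_mod_cast congrArg Nat.cast this
  have key : ∑ i, ∑ j, (if σ i = true ∧ σ j = false then (1:ℝ) else 0)
      = ((Finset.univ.filter (fun i => σ i = true)).card : ℝ)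
        * ((Finset.univ.filter (fun i => σ i = false)).card : ℝ) := by
    have h1 : ∀ i : Fin n, ∑ j, (if σ i = true ∧ σ j = false then (1:ℝ) else 0)
        = (if σ i = true then (1:ℝ) else 0) * ∑ j, (if σ j = false then (1:ℝ) else 0) := by
      intro i
      by_cases h : σ i = true <;> simp [h]
    rw [Finset.sum_congr rfl (fun i _ => h1 i), ← Finset.sum_mul,
      Finset.sum_boole, Finset.sum_boole]
  rw [show ((n : ℝ) - ((Finset.univ.filter (fun i => σ i = true)).card : ℝ))
      = ((Finset.univ.filter (fun i => σ i = false)).card : ℝ) by linarith]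
  rw [← key, pair_sum_eq (fun i j => if σ i = true ∧ σ j = false then (1:ℝ) else 0)
    (by intro i; simp)]
  apply Finset.sum_congr rfl
  intro p _
  rcases hb1 : σ p.1 <;> rcases hb2 : σ p.2 <;> simp [hb1, hb2]

/-- Factorization of the edge likelihood. -/
lemma edge_factor (n : ℕ) (pin pout : ℝ)
    (hpout : 0 < pout) (hp : pout < pin) (hpin : pin < 1)
    (a : Fin n → Fin n → ℕ) (ha01 : ∀ i j, a i j = 0 ∨ a i j = 1)
    (σ : Fin n → Bool) :
    (∏ p ∈ Finset.univ.filter (fun p : Fin n × Fin n => p.1 < p.2),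
      (if a p.1 p.2 = 1 then (if σ p.1 = σ p.2 then pin else pout)
        else (if σ p.1 = σ p.2 then 1 - pin else 1 - pout)))
    = (∏ p ∈ Finset.univ.filter (fun p : Fin n × Fin n => p.1 < p.2),
        (if a p.1 p.2 = 1 then pin else 1 - pin))
      * Real.exp (∑ p ∈ Finset.univ.filter (fun p : Fin n × Fin n => p.1 < p.2),
          (if σ p.1 = σ p.2 then 0 else
            Real.log ((1 - pout) / (1 - pin))
              - Real.log ((pin * (1 - pout)) / (pout * (1 - pin))) * (a p.1 p.2 : ℝ))) := by
  have hpin0 : 0 < pin := lt_trans hpout hp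
  have h1pin : 0 < 1 - pin := by linarith
  have h1pout : 0 < 1 - pout := by linarith
  rw [Real.exp_sum, ← Finset.prod_mul_distrib]
  apply Finset.prod_congr rfl
  intro p _
  by_cases hσ : σ p.1 = σ p.2
  · simp [hσ]
  · rcases ha01 p.1 p.2 with h | h
    · rw [if_neg (by omega : ¬ a p.1 p.2 = 1), if_neg (by omega : ¬ a p.1 p.2 = 1),
        if_neg hσ, if_neg hσ, h]
      push_cast
      rw [mul_zero, sub_zero, Real.exp_log (by positivity)]
      field_simp
    · rw [if_pos h, if_pos h, if_neg hσ, if_neg hσ, h]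
      push_cast
      rw [mul_one, Real.exp_sub, Real.exp_log (by positivity), Real.exp_log (by positivity)]
      field_simp

/-- Factorization of the oracle likelihood. -/
lemma oracle_factor (n : ℕ) (η θ : ℝ) (hθ : 0 < θ) (hθη : θ < η)
    (s : Fin n → ℤ) (hs : ∀ i, s i = -1 ∨ s i = 0 ∨ s i = 1) (σ : Fin n → Bool) :
    (∏ j, (if s j = sgnB (σ j) then η else if s j = - sgnB (σ j) then θ else 1 - η - θ))
    = (∏ j, (if s j = 0 then 1 - η - θ else η))
      * Real.exp (∑ j, (if s j ≠ 0 ∧ sgnB (σ j) ≠ s j then -Real.log (η / θ) else 0)) := by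
  have hη : 0 < η := lt_trans hθ hθη
  have hexp : Real.exp (-Real.log (η / θ)) = θ / η := by
    rw [Real.exp_neg, Real.exp_log (div_pos hη hθ), inv_div]
  rw [Real.exp_sum, ← Finset.prod_mul_distrib]
  apply Finset.prod_congr rfl
  intro j _
  rcases hs j with h | h | h <;> cases hb : σ j <;>
    simp [h, hb, sgnB, Real.exp_zero, hexp] <;>
    field_simp

lemma logK_pos (pin pout : ℝ) (hpout : 0 < pout) (hp : pout < pin) (hpin : pin < 1) :
    0 < Real.log ((pin * (1 - pout)) / (pout * (1 - pin))) := by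
  apply Real.log_pos
  rw [one_lt_div (by nlinarith)]
  nlinarith

/-- The joint mass factors as a positive constant (not depending on `σ`) times
`exp(−K · mapObjective)`. -/
lemma jointMass_factor (n : ℕ) (pin pout η θ : ℝ)
    (hpout : 0 < pout) (hp : pout < pin) (hpin : pin < 1)
    (hθ : 0 < θ) (hθη : θ < η)
    (a : Fin n → Fin n → ℕ) (ha01 : ∀ i j, a i j = 0 ∨ a i j = 1)
    (hasym : ∀ i j, a i j = a j i)
    (s : Fin n → ℤ) (hs : ∀ i, s i = -1 ∨ s i = 0 ∨ s i = 1)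
    (σ : Fin n → Bool) :
    jointMass n pin pout η θ σ a s
      = ((1 / 2 : ℝ) ^ n
          * (∏ p ∈ Finset.univ.filter (fun p : Fin n × Fin n => p.1 < p.2),
              (if a p.1 p.2 = 1 then pin else 1 - pin))
          * ∏ j, (if s j = 0 then 1 - η - θ else η))
        * Real.exp (-(Real.log ((pin * (1 - pout)) / (pout * (1 - pin))))
            * mapObjective n
              (Real.log ((1 - pout) / (1 - pin)) /
                Real.log ((pin * (1 - pout)) / (pout * (1 - pin))))
              (Real.log (η / θ) /
                Real.log ((pin * (1 - pout)) / (pout * (1 - pin))))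
              σ a s) := by
  have hK := logK_pos pin pout hpout hp hpin
  set K := Real.log ((pin * (1 - pout)) / (pout * (1 - pin))) with hKdef
  set TK := Real.log ((1 - pout) / (1 - pin)) with hTKdef
  set LK := Real.log (η / θ) with hLKdef
  rw [jointMass, edge_factor n pin pout hpout hp hpin a ha01 σ,
    oracle_factor n η θ hθ hθη s hs σ]
  rw [show ∀ c1 pe e po o : ℝ, c1 * (pe * Real.exp e) * (po * Real.exp o)
      = (c1 * pe * po) * Real.exp (e + o) by intros; rw [Real.exp_add]; ring]
  congr 1
  have e1 : ∑ p ∈ Finset.univ.filter (fun p : Fin n × Fin n => p.1 < p.2),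
      (if σ p.1 = σ p.2 then 0 else TK - K * (a p.1 p.2 : ℝ))
      = TK * (((Finset.univ.filter (fun i => σ i = true)).card : ℝ)
          * ((n : ℝ) - ((Finset.univ.filter (fun i => σ i = true)).card : ℝ)))
        - K * cutVal n σ a := by
    rw [cutVal_pairs σ a hasym, count_pairs σ, Finset.mul_sum, Finset.mul_sum,
      ← Finset.sum_sub_distrib]
    apply Finset.sum_congr rfl
    intro p _
    by_cases h : σ p.1 = σ p.2 <;> simp [h]
  have e2 : ∑ j, (if s j ≠ 0 ∧ sgnB (σ j) ≠ s j then -LK else 0)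
      = -LK * ((Finset.univ.filter (fun i => s i ≠ 0 ∧ sgnB (σ i) ≠ s i)).card : ℝ) := by
    rw [Finset.sum_ite, Finset.sum_const_zero, add_zero, Finset.sum_const, nsmul_eq_mul]
    ring
  rw [e1, e2, mapObjective]
  field_simp
  ring

/-- **Theorem 1, noisy oracle case.** The maximizers of the posterior
`Pr(σ⁰ = σ | A = a, S = s)` are exactly the minimizers of
`cut(C₁^σ, a) − τ|C₁^σ|(n − |C₁^σ|) + λ #{i : s_i ≠ 0 and σ_i ≠ s_i}`,
with `τ = log((1−p_out)/(1−p_in)) / log(p_in(1−p_out)/(p_out(1−p_in)))` and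
`λ = log(η/θ) / log(p_in(1−p_out)/(p_out(1−p_in)))`. -/
theorem map_estimator_noisy_oracle
    (n : ℕ) (hn : 0 < n) (pin pout η θ : ℝ)
    (hpout : 0 < pout) (hp : pout < pin) (hpin : pin < 1)
    (hθ : 0 < θ) (hθη : θ < η) (hsum : θ + η ≤ 1)
    (a : Fin n → Fin n → ℕ)
    (ha01 : ∀ i j, a i j = 0 ∨ a i j = 1)
    (hasym : ∀ i j, a i j = a j i)
    (hadiag : ∀ i, a i i = 0)
    (s : Fin n → ℤ) (hs : ∀ i, s i = -1 ∨ s i = 0 ∨ s i = 1)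
    (hpos : 0 < ∑ σ : Fin n → Bool, jointMass n pin pout η θ σ a s) :
    {σ : Fin n → Bool | ∀ σ' : Fin n → Bool,
        posterior n pin pout η θ σ' a s ≤ posterior n pin pout η θ σ a s}
      =
    {σ : Fin n → Bool | ∀ σ' : Fin n → Bool,
        mapObjective n
            (Real.log ((1 - pout) / (1 - pin)) /
              Real.log ((pin * (1 - pout)) / (pout * (1 - pin))))
            (Real.log (η / θ) /
              Real.log ((pin * (1 - pout)) / (pout * (1 - pin))))
            σ a s
          ≤ mapObjective n
            (Real.log ((1 - pout) / (1 - pin)) /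
              Real.log ((pin * (1 - pout)) / (pout * (1 - pin))))
            (Real.log (η / θ) /
              Real.log ((pin * (1 - pout)) / (pout * (1 - pin))))
            σ' a s} := by
  have hK := logK_pos pin pout hpout hp hpin
  set K := Real.log ((pin * (1 - pout)) / (pout * (1 - pin))) with hKdef
  set τ := Real.log ((1 - pout) / (1 - pin)) / K with hτdef
  set lam := Real.log (η / θ) / K with hlamdef
  set C := ((1 / 2 : ℝ) ^ n
      * (∏ p ∈ Finset.univ.filter (fun p : Fin n × Fin n => p.1 < p.2),
          (if a p.1 p.2 = 1 then pin else 1 - pin))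
      * ∏ j, (if s j = 0 then 1 - η - θ else η)) with hCdef
  have hfac : ∀ σ : Fin n → Bool,
      jointMass n pin pout η θ σ a s
        = C * Real.exp (-K * mapObjective n τ lam σ a s) :=
    fun σ => jointMass_factor n pin pout η θ hpout hp hpin hθ hθη a ha01 hasym s hs σ
  have hexppos : 0 < ∑ σ : Fin n → Bool, Real.exp (-K * mapObjective n τ lam σ a s) :=
    Finset.sum_pos (fun σ _ => Real.exp_pos _) ⟨fun _ => true, Finset.mem_univ _⟩
  have hC : 0 < C := by
    have h := hpos
    rw [Finset.sum_congr rfl (fun σ _ => hfac σ), ← Finset.mul_sum] at h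
    rcases mul_pos_iff.mp h with ⟨h1, _⟩ | ⟨_, h2⟩
    · exact h1
    · linarith
  have key : ∀ σ σ' : Fin n → Bool,
      (posterior n pin pout η θ σ' a s ≤ posterior n pin pout η θ σ a s)
        ↔ (mapObjective n τ lam σ a s ≤ mapObjective n τ lam σ' a s) := by
    intro σ σ'
    rw [posterior, posterior, div_le_div_iff_of_pos_right hpos, hfac σ, hfac σ',
      mul_le_mul_iff_right₀ hC, Real.exp_le_exp]
    constructor <;> intro h <;> nlinarith [hK]
  ext σ
  simp only [Set.mem_setOf_eq]
  exact forall_congr' fun σ' => key σ σ'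


end
end

section
/- Let n be a positive integer, let 0 < p_out < p_in < 1, let θ = 0 and 0 < η ≤ 1 (perfect oracle). Under the SSBM-with-oracle joint distribution, for every symmetric 0-1 adjacency matrix a (with zero diagonal) and every vector s ∈ {−1,0,1}ⁿ such that Pr(A = a, S = s) > 0, the set of maximizers over σ ∈ {−1,1}ⁿ of Pr(σ⁰ = σ | A = a, S = s) is equal to the set of minimizers of cut(C₁^σ, a) − τ·|C₁^σ|·(n − |C₁^σ|) over all σ ∈ {−1,1}ⁿ satisfying σ_i = s_i for every i with s_i ≠ 0, where τ := log((1−p_out)/(1−p_in)) / log((p_in(1−p_out))/(p_out(1−p_in))). -/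
open Finset

noncomputable section

/-- The unsupervised MAP objective `cut(C₁^σ, a) − τ|C₁^σ|(n − |C₁^σ|)`. -/
def cutObjective (n : ℕ) (τ : ℝ) (σ : Fin n → Bool) (a : Fin n → Fin n → ℕ) : ℝ :=
  cutVal n σ a
    - τ * ((Finset.univ.filter (fun i => σ i = true)).card : ℝ)
        * ((n : ℝ) - ((Finset.univ.filter (fun i => σ i = true)).card : ℝ))



def Pn (n : ℕ) : Finset (Fin n × Fin n) := Finset.univ.filter (fun p : Fin n × Fin n => p.1 < p.2)

lemma sum_pairs {n : ℕ} (f : Fin n × Fin n → ℝ) (hdiag : ∀ p : Fin n × Fin n, p.1 = p.2 → f p = 0) :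
    ∑ p : Fin n × Fin n, f p = ∑ p ∈ Pn n, (f p + f (p.2, p.1)) := by
  classical
  have h1 : ∀ p : Fin n × Fin n, f p
      = (if p.1 < p.2 then f p else 0) + (if p.2 < p.1 then f p else 0) := by
    intro p
    rcases lt_trichotomy p.1 p.2 with h | h | h
    · simp [h, not_lt_of_gt h]
    · simp [h, lt_irrefl, hdiag p h]
    · simp [h, not_lt_of_gt h]
  calc ∑ p : Fin n × Fin n, f p
      = ∑ p : Fin n × Fin n, ((if p.1 < p.2 then f p else 0) + (if p.2 < p.1 then f p else 0)) :=
        Finset.sum_congr rfl (fun p _ => h1 p)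
    _ = (∑ p : Fin n × Fin n, (if p.1 < p.2 then f p else 0))
        + ∑ p : Fin n × Fin n, (if p.2 < p.1 then f p else 0) := Finset.sum_add_distrib
    _ = (∑ p : Fin n × Fin n, (if p.1 < p.2 then f p else 0))
        + ∑ p : Fin n × Fin n, (if p.1 < p.2 then f (p.2, p.1) else 0) := by
        congr 1
        exact (Fintype.sum_equiv (Equiv.prodComm (Fin n) (Fin n))
          (fun p => if p.1 < p.2 then f (p.2, p.1) else 0)
          (fun p => if p.2 < p.1 then f p else 0)
          (fun p => rfl)).symm
    _ = ∑ p ∈ Pn n, (f p + f (p.2, p.1)) := by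
        rw [← Finset.sum_add_distrib]
        rw [Pn, Finset.sum_filter]
        apply Finset.sum_congr rfl
        intro p _
        by_cases h : p.1 < p.2 <;> simp [h]


lemma cut_eq {n : ℕ} (σ : Fin n → Bool) (a : Fin n → Fin n → ℕ)
    (hasym : ∀ i j, a i j = a j i) :
    (∑ i, ∑ j, (if σ i = true ∧ σ j = false then (a i j : ℝ) else 0))
      = ∑ p ∈ Pn n, (if σ p.1 = σ p.2 then 0 else (a p.1 p.2 : ℝ)) := by
  classical
  have hsp := sum_pairs (n := n) (fun p => if σ p.1 = true ∧ σ p.2 = false then (a p.1 p.2 : ℝ) else 0)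
    (by intro p hp; rcases h : σ p.1 <;> simp [h, ← hp])
  simp only [Fintype.sum_prod_type] at hsp
  rw [hsp]
  apply Finset.sum_congr rfl
  intro p _
  rcases h1 : σ p.1 <;> rcases h2 : σ p.2 <;> simp [h1, h2, hasym p.1 p.2]

lemma count_eq {n : ℕ} (σ : Fin n → Bool) :
    ∑ p ∈ Pn n, (if σ p.1 = σ p.2 then (0:ℝ) else 1)
      = ((Finset.univ.filter (fun i => σ i = true)).card : ℝ)
        * ((n : ℝ) - ((Finset.univ.filter (fun i => σ i = true)).card : ℝ)) := by
  classical
  have hsp := sum_pairs (n := n) (fun p => if σ p.1 = true ∧ σ p.2 = false then (1 : ℝ) else 0)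
    (by intro p hp; rcases h : σ p.1 <;> simp [h, ← hp])
  have hL : ∑ p : Fin n × Fin n, (if σ p.1 = true ∧ σ p.2 = false then (1 : ℝ) else 0)
      = ((Finset.univ.filter (fun i => σ i = true)).card : ℝ)
        * ((Finset.univ.filter (fun i => σ i = false)).card : ℝ) := by
    rw [Fintype.sum_prod_type]
    have : ∀ i j : Fin n, (if σ i = true ∧ σ j = false then (1 : ℝ) else 0)
        = (if σ i = true then (1:ℝ) else 0) * (if σ j = false then (1:ℝ) else 0) := by
      intro i j; by_cases h1 : σ i = true <;> by_cases h2 : σ j = false <;> simp [h1, h2]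
    simp_rw [this]
    rw [← Finset.sum_mul_sum]
    simp [Finset.sum_ite_eq, Finset.sum_boole]
  have hcard : ((Finset.univ.filter (fun i => σ i = false)).card : ℝ)
      = (n : ℝ) - ((Finset.univ.filter (fun i => σ i = true)).card : ℝ) := by
    have := Finset.card_filter_add_card_filter_not (s := (Finset.univ : Finset (Fin n)))
      (p := fun i => σ i = true)
    simp only [Finset.card_univ, Fintype.card_fin] at this
    have h2 : (Finset.univ.filter (fun i => ¬ σ i = true)) = (Finset.univ.filter (fun i => σ i = false)) := by
      apply Finset.filter_congr; intro i _; simp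
    rw [h2] at this
    have : ((Finset.univ.filter (fun i => σ i = true)).card : ℝ)
        + ((Finset.univ.filter (fun i => σ i = false)).card : ℝ) = (n : ℝ) := by
      exact_mod_cast congrArg (Nat.cast : ℕ → ℝ) this
    linarith
  have hR : ∑ p ∈ Pn n, ((if σ p.1 = true ∧ σ p.2 = false then (1 : ℝ) else 0)
      + (if σ p.2 = true ∧ σ p.1 = false then (1 : ℝ) else 0))
      = ∑ p ∈ Pn n, (if σ p.1 = σ p.2 then (0:ℝ) else 1) := by
    apply Finset.sum_congr rfl
    intro p _
    rcases h1 : σ p.1 <;> rcases h2 : σ p.2 <;> simp [h1, h2]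
  rw [← hR, ← hsp, hL, hcard]

section LogL
variable {n : ℕ} (pin pout : ℝ)

def Lfun (σ : Fin n → Bool) (a : Fin n → Fin n → ℕ) : ℝ :=
  ∏ p ∈ Finset.univ.filter (fun p : Fin n × Fin n => p.1 < p.2),
      (if a p.1 p.2 = 1 then (if σ p.1 = σ p.2 then pin else pout)
        else (if σ p.1 = σ p.2 then 1 - pin else 1 - pout))

variable (hpout : 0 < pout) (hp : pout < pin) (hpin : pin < 1)

include hpout hp hpin

lemma Lfun_pos (σ : Fin n → Bool) (a : Fin n → Fin n → ℕ) : 0 < Lfun pin pout σ a := by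
  apply Finset.prod_pos
  intro p _
  by_cases h1 : a p.1 p.2 = 1 <;> by_cases h2 : σ p.1 = σ p.2 <;>
    simp [h1, h2] <;> linarith

lemma lam_pos : 0 < Real.log ((pin * (1 - pout)) / (pout * (1 - pin))) := by
  apply Real.log_pos
  rw [one_lt_div (by nlinarith)]
  nlinarith

lemma lam_eq : Real.log ((pin * (1 - pout)) / (pout * (1 - pin)))
    = Real.log pin - Real.log pout + (Real.log (1 - pout) - Real.log (1 - pin)) := by
  rw [Real.log_div (ne_of_gt (by nlinarith)) (ne_of_gt (by nlinarith)),
    Real.log_mul (ne_of_gt (by nlinarith)) (ne_of_gt (by nlinarith)),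
    Real.log_mul (ne_of_gt (by nlinarith)) (ne_of_gt (by nlinarith))]
  ring

omit hpout in
lemma beta_eq : Real.log ((1 - pout) / (1 - pin)) = Real.log (1 - pout) - Real.log (1 - pin) :=
  Real.log_div (ne_of_gt (by nlinarith)) (ne_of_gt (by nlinarith))

lemma log_Lfun (σ : Fin n → Bool) (a : Fin n → Fin n → ℕ) (ha01 : ∀ i j, a i j = 0 ∨ a i j = 1) :
    Real.log (Lfun pin pout σ a)
      = (∑ p ∈ Pn n, (if a p.1 p.2 = 1 then Real.log pin else Real.log (1 - pin)))
        + (Real.log ((1 - pout) / (1 - pin))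
            * ∑ p ∈ Pn n, (if σ p.1 = σ p.2 then (0:ℝ) else 1)
          - Real.log ((pin * (1 - pout)) / (pout * (1 - pin)))
            * ∑ p ∈ Pn n, (if σ p.1 = σ p.2 then 0 else (a p.1 p.2 : ℝ))) := by
  have hβ := beta_eq pin pout hp hpin
  have hlam := lam_eq pin pout hpout hp hpin
  rw [Lfun, Real.log_prod]
  · rw [Finset.mul_sum, Finset.mul_sum, ← Finset.sum_sub_distrib, ← Finset.sum_add_distrib]
    apply Finset.sum_congr rfl
    intro p _
    rcases ha01 p.1 p.2 with h1 | h1 <;> by_cases h2 : σ p.1 = σ p.2 <;>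
      simp only [h1, h2, hβ, hlam, if_true, if_false, Nat.cast_zero, Nat.cast_one,
        Nat.one_ne_zero, Nat.zero_ne_one, ite_true, ite_false, reduceIte] <;>
      [skip; skip; skip; skip] <;>
      first
        | ring
        | (rw [Real.log_div (ne_of_gt (by nlinarith)) (ne_of_gt (by nlinarith))]; ring)
        | simp
  · intro p _
    by_cases h1 : a p.1 p.2 = 1 <;> by_cases h2 : σ p.1 = σ p.2 <;>
      simp [h1, h2] <;> intro hc <;> nlinarith

end LogL


section Main
variable {n : ℕ} {pin pout : ℝ}
variable (hpout : 0 < pout) (hp : pout < pin) (hpin : pin < 1)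

include hpout hp hpin

lemma Lfun_le_iff (σ σ' : Fin n → Bool) (a : Fin n → Fin n → ℕ)
    (ha01 : ∀ i j, a i j = 0 ∨ a i j = 1) (hasym : ∀ i j, a i j = a j i) :
    Lfun pin pout σ' a ≤ Lfun pin pout σ a ↔
      cutObjective n
          (Real.log ((1 - pout) / (1 - pin)) /
            Real.log ((pin * (1 - pout)) / (pout * (1 - pin)))) σ a
        ≤ cutObjective n
          (Real.log ((1 - pout) / (1 - pin)) /
            Real.log ((pin * (1 - pout)) / (pout * (1 - pin)))) σ' a := by
  set lam := Real.log ((pin * (1 - pout)) / (pout * (1 - pin))) with hlamdef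
  set bet := Real.log ((1 - pout) / (1 - pin)) with hbetdef
  have hlampos : 0 < lam := lam_pos pin pout hpout hp hpin
  have hobj : ∀ τ : Fin n → Bool, lam * cutObjective n (bet / lam) τ a
      = lam * (∑ p ∈ Pn n, (if τ p.1 = τ p.2 then 0 else (a p.1 p.2 : ℝ)))
        - bet * ∑ p ∈ Pn n, (if τ p.1 = τ p.2 then (0:ℝ) else 1) := by
    intro τ
    rw [cutObjective, cutVal, cut_eq τ a hasym, count_eq τ]
    field_simp
  rw [← Real.log_le_log_iff (Lfun_pos pin pout hpout hp hpin σ' a)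
        (Lfun_pos pin pout hpout hp hpin σ a),
    log_Lfun pin pout hpout hp hpin σ a ha01, log_Lfun pin pout hpout hp hpin σ' a ha01]
  simp only [← hlamdef, ← hbetdef]
  constructor
  · intro h
    have h2 : lam * cutObjective n (bet / lam) σ a ≤ lam * cutObjective n (bet / lam) σ' a := by
      rw [hobj σ, hobj σ']
      linarith
    exact le_of_mul_le_mul_left h2 hlampos
  · intro h
    have h2 := mul_le_mul_of_nonneg_left h (le_of_lt hlampos)
    rw [hobj σ, hobj σ'] at h2
    linarith

end Main

section Oracle
variable {n : ℕ} (η : ℝ) (σ : Fin n → Bool) (s : Fin n → ℤ)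

lemma sgnB_ne_zero (b : Bool) : sgnB b ≠ 0 := by cases b <;> decide

lemma oracle_agree (hag : ∀ i, s i ≠ 0 → sgnB (σ i) = s i) :
    (∏ j, (if s j = sgnB (σ j) then η else if s j = - sgnB (σ j) then (0:ℝ) else 1 - η - 0))
      = ∏ j, (if s j = 0 then 1 - η else η) := by
  apply Finset.prod_congr rfl
  intro j _
  by_cases h : s j = 0
  · have h1 : ¬ s j = sgnB (σ j) := by rw [h]; exact fun hc => sgnB_ne_zero (σ j) hc.symm
    have h2 : ¬ s j = - sgnB (σ j) := by
      rw [h]; intro hc; exact sgnB_ne_zero (σ j) (by omega)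
    rw [if_neg h1, if_neg h2, if_pos h]; ring
  · have h3 := hag j h
    rw [if_pos h3.symm, if_neg h]

lemma oracle_disagree (hs : ∀ i, s i = -1 ∨ s i = 0 ∨ s i = 1)
    (j : Fin n) (hj : s j ≠ 0) (hne : sgnB (σ j) ≠ s j) :
    (∏ j, (if s j = sgnB (σ j) then η else if s j = - sgnB (σ j) then (0:ℝ) else 1 - η - 0))
      = 0 := by
  apply Finset.prod_eq_zero (Finset.mem_univ j)
  rcases hs j with h | h | h <;> cases hb : σ j <;>
    simp [sgnB, h, hb] at hne ⊢ <;> omega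

end Oracle

/-- **Theorem 1, perfect oracle case (`θ = 0`).** The maximizers of the posterior
`Pr(σ⁰ = σ | A = a, S = s)` are exactly the minimizers of
`cut(C₁^σ, a) − τ|C₁^σ|(n − |C₁^σ|)` over the sign vectors `σ` that agree with
the oracle on every labeled node, with
`τ = log((1−p_out)/(1−p_in)) / log(p_in(1−p_out)/(p_out(1−p_in)))`. -/
theorem map_estimator_perfect_oracle
    (n : ℕ) (hn : 0 < n) (pin pout η : ℝ)
    (hpout : 0 < pout) (hp : pout < pin) (hpin : pin < 1)
    (hη : 0 < η) (hη1 : η ≤ 1)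
    (a : Fin n → Fin n → ℕ)
    (ha01 : ∀ i j, a i j = 0 ∨ a i j = 1)
    (hasym : ∀ i j, a i j = a j i)
    (hadiag : ∀ i, a i i = 0)
    (s : Fin n → ℤ) (hs : ∀ i, s i = -1 ∨ s i = 0 ∨ s i = 1)
    (hpos : 0 < ∑ σ : Fin n → Bool, jointMass n pin pout η 0 σ a s) :
    {σ : Fin n → Bool | ∀ σ' : Fin n → Bool,
        posterior n pin pout η 0 σ' a s ≤ posterior n pin pout η 0 σ a s}
      =
    {σ : Fin n → Bool |
        (∀ i, s i ≠ 0 → sgnB (σ i) = s i) ∧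
        ∀ σ' : Fin n → Bool, (∀ i, s i ≠ 0 → sgnB (σ' i) = s i) →
          cutObjective n
              (Real.log ((1 - pout) / (1 - pin)) /
                Real.log ((pin * (1 - pout)) / (pout * (1 - pin))))
              σ a
            ≤ cutObjective n
              (Real.log ((1 - pout) / (1 - pin)) /
                Real.log ((pin * (1 - pout)) / (pout * (1 - pin))))
              σ' a} := by
  classical
  have hLpos : ∀ τ : Fin n → Bool, 0 < Lfun pin pout τ a :=
    fun τ => Lfun_pos pin pout hpout hp hpin τ a
  have hc : (0:ℝ) < (1/2 : ℝ)^n := by positivity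
  set K : ℝ := ∏ j, (if s j = 0 then 1 - η else η) with hKdef
  have hK0 : 0 ≤ K := by
    rw [hKdef]
    apply Finset.prod_nonneg
    intro j _
    by_cases h : s j = 0 <;> simp [h] <;> linarith
  have hjm_agree : ∀ τ : Fin n → Bool, (∀ i, s i ≠ 0 → sgnB (τ i) = s i) →
      jointMass n pin pout η 0 τ a s = (1/2:ℝ)^n * Lfun pin pout τ a * K := by
    intro τ hag
    unfold jointMass
    rw [oracle_agree η τ s hag, hKdef]
    rfl
  have hjm_dis : ∀ τ : Fin n → Bool, ¬ (∀ i, s i ≠ 0 → sgnB (τ i) = s i) →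
      jointMass n pin pout η 0 τ a s = 0 := by
    intro τ hna
    push_neg at hna
    obtain ⟨j, hj, hne⟩ := hna
    unfold jointMass
    rw [oracle_disagree η τ s hs j hj hne, mul_zero]
  have hKpos : 0 < K := by
    rcases lt_or_eq_of_le hK0 with h | h
    · exact h
    · exfalso
      have hzero : ∀ τ : Fin n → Bool, jointMass n pin pout η 0 τ a s = 0 := by
        intro τ
        by_cases hag : ∀ i, s i ≠ 0 → sgnB (τ i) = s i
        · rw [hjm_agree τ hag, ← h, mul_zero]
        · exact hjm_dis τ hag
      rw [Finset.sum_congr rfl (fun τ _ => hzero τ), Finset.sum_const, smul_zero] at hpos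
      exact lt_irrefl 0 hpos
  have hjm_le : ∀ τ τ' : Fin n → Bool,
      (posterior n pin pout η 0 τ' a s ≤ posterior n pin pout η 0 τ a s
        ↔ jointMass n pin pout η 0 τ' a s ≤ jointMass n pin pout η 0 τ a s) := by
    intro τ τ'
    unfold posterior
    exact div_le_div_iff_of_pos_right hpos
  set σ₀ : Fin n → Bool := fun i => decide (s i = 1) with hσ₀def
  have hag₀ : ∀ i, s i ≠ 0 → sgnB (σ₀ i) = s i := by
    intro i hi
    rcases hs i with h | h | h
    · simp [hσ₀def, sgnB, h]
    · exact absurd h hi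
    · simp [hσ₀def, sgnB, h]
  have hjm0 : 0 < jointMass n pin pout η 0 σ₀ a s := by
    rw [hjm_agree σ₀ hag₀]
    have := hLpos σ₀
    positivity
  ext σ
  simp only [Set.mem_setOf_eq]
  constructor
  · intro h
    have hσpos : 0 < jointMass n pin pout η 0 σ a s :=
      lt_of_lt_of_le hjm0 ((hjm_le σ σ₀).mp (h σ₀))
    have hag : ∀ i, s i ≠ 0 → sgnB (σ i) = s i := by
      by_contra hna
      rw [hjm_dis σ hna] at hσpos
      exact lt_irrefl 0 hσpos
    refine ⟨hag, fun σ' hag' => ?_⟩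
    have hle := (hjm_le σ σ').mp (h σ')
    rw [hjm_agree σ hag, hjm_agree σ' hag'] at hle
    have h1 : (1/2:ℝ)^n * Lfun pin pout σ' a ≤ (1/2:ℝ)^n * Lfun pin pout σ a :=
      le_of_mul_le_mul_right hle hKpos
    have h2 : Lfun pin pout σ' a ≤ Lfun pin pout σ a :=
      le_of_mul_le_mul_left h1 hc
    exact (Lfun_le_iff hpout hp hpin σ σ' a ha01 hasym).mp h2
  · rintro ⟨hag, hmin⟩ σ'
    rw [hjm_le σ σ']
    by_cases h' : ∀ i, s i ≠ 0 → sgnB (σ' i) = s i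
    · rw [hjm_agree σ hag, hjm_agree σ' h']
      have hLle : Lfun pin pout σ' a ≤ Lfun pin pout σ a :=
        (Lfun_le_iff hpout hp hpin σ σ' a ha01 hasym).mpr (hmin σ' h')
      have := mul_le_mul_of_nonneg_left hLle (le_of_lt hc)
      exact mul_le_mul_of_nonneg_right this hK0
    · rw [hjm_dis σ' h', hjm_agree σ hag]
      have := hLpos σ
      positivity


end
end
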